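/- (Integration by parts for nabla discrete ABR fractional differences) Let a, b ∈ ℤ with b - a ≥ 2, α ∈ (0,1/2), B(α) > 0, and f, g : {a,...,b} → ℝ. Then Σ_{s=a+1}^{b-1} f(s) · ^{ABR}_a∇^α g(s) = Σ_{s=a+1}^{b-1} g(s) · ^{ABR}∇_b^α f(s). -/

import Mathlib

/-- Nabla discrete Mittag-Leffler function
`E_{\overline{α}}(λ, z) = Σ_{k=0}^∞ λ^k z^{\overline{kα}} / Γ(kα+1)`,
with the rising function `z^{\overline{β}} = Γ(z+β)/Γ(z)`. -/
noncomputable def dML (α lam z : ℝ) : ℝ :=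
  ∑' k : ℕ, lam ^ k * (Real.Gamma (z + k * α) / Real.Gamma z) / Real.Gamma (k * α + 1)

/-- Left ABR nabla fractional difference
`^{ABR}_a∇^α g(t) = (B/(1-α)) ∇_t Σ_{s=a+1}^t g(s) E_{\overline{α}}(-α/(1-α), t-s+1)`. -/
noncomputable def ABRnablaLeft (B α : ℝ) (a : ℤ) (g : ℤ → ℝ) (t : ℤ) : ℝ :=
  (B / (1 - α)) *
    ((fun τ : ℤ => ∑ s ∈ Finset.Icc (a + 1) τ,
        g s * dML α (-(α / (1 - α))) ((τ : ℝ) - (s : ℝ) + 1)) t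
     - (fun τ : ℤ => ∑ s ∈ Finset.Icc (a + 1) τ,
        g s * dML α (-(α / (1 - α))) ((τ : ℝ) - (s : ℝ) + 1)) (t - 1))

/-- Right ABR nabla fractional difference
`^{ABR}∇_b^α f(t) = -(B/(1-α)) Δ_t Σ_{s=t}^{b-1} f(s) E_{\overline{α}}(-α/(1-α), s-t+1)`. -/
noncomputable def ABRnablaRight (B α : ℝ) (b : ℤ) (f : ℤ → ℝ) (t : ℤ) : ℝ :=
  -(B / (1 - α)) *
    ((fun τ : ℤ => ∑ s ∈ Finset.Icc τ (b - 1),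
        f s * dML α (-(α / (1 - α))) ((s : ℝ) - (τ : ℝ) + 1)) (t + 1)
     - (fun τ : ℤ => ∑ s ∈ Finset.Icc τ (b - 1),
        f s * dML α (-(α / (1 - α))) ((s : ℝ) - (τ : ℝ) + 1)) t)

/-- Integration by parts for nabla discrete ABR fractional differences. -/
theorem ABR_nabla_integration_by_parts (a b : ℤ) (hab : 2 ≤ b - a) (α B : ℝ)
    (hα0 : 0 < α) (hα2 : α < 1 / 2) (hB : 0 < B) (f g : ℤ → ℝ) :
    (∑ s ∈ Finset.Icc (a + 1) (b - 1), f s * ABRnablaLeft B α a g s)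
      = ∑ s ∈ Finset.Icc (a + 1) (b - 1), g s * ABRnablaRight B α b f s := by
  set c := B / (1 - α) with hc
  set E : ℝ → ℝ := dML α (-(α / (1 - α))) with hE
  have key1 :
      (∑ t ∈ Finset.Icc (a+1) (b-1), ∑ s ∈ Finset.Icc (a+1) t,
        c * (f t * g s * E ((t:ℝ) - (s:ℝ) + 1)))
      = ∑ s ∈ Finset.Icc (a+1) (b-1), ∑ t ∈ Finset.Icc s (b-1),
        c * (f t * g s * E ((t:ℝ) - (s:ℝ) + 1)) := by
    apply Finset.sum_comm'
    intro x y
    simp only [Finset.mem_Icc]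
    omega
  have key2 :
      (∑ t ∈ Finset.Icc (a+1) (b-1), ∑ s ∈ Finset.Icc (a+1) (t-1),
        c * (f t * g s * E ((t:ℝ) - (s:ℝ))))
      = ∑ s ∈ Finset.Icc (a+1) (b-1), ∑ t ∈ Finset.Icc (s+1) (b-1),
        c * (f t * g s * E ((t:ℝ) - (s:ℝ))) := by
    apply Finset.sum_comm'
    intro x y
    simp only [Finset.mem_Icc]
    omega
  simp only [ABRnablaLeft, ABRnablaRight, ← hc, ← hE]
  have L : ∀ t : ℤ, f t * (c * ((∑ s ∈ Finset.Icc (a+1) t, g s * E ((t:ℝ) - (s:ℝ) + 1))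
      - ∑ s ∈ Finset.Icc (a+1) (t-1), g s * E (((t-1 : ℤ):ℝ) - (s:ℝ) + 1)))
      = (∑ s ∈ Finset.Icc (a+1) t, c * (f t * g s * E ((t:ℝ) - (s:ℝ) + 1)))
        - ∑ s ∈ Finset.Icc (a+1) (t-1), c * (f t * g s * E ((t:ℝ) - (s:ℝ))) := by
    intro t
    rw [mul_sub, mul_sub, Finset.mul_sum, Finset.mul_sum, Finset.mul_sum, Finset.mul_sum]
    congr 1
    · exact Finset.sum_congr rfl fun s _ => by ring
    · refine Finset.sum_congr rfl fun s _ => ?_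
      push_cast
      ring_nf
  have R : ∀ s : ℤ, g s * (-c * ((∑ t ∈ Finset.Icc (s+1) (b-1),
        f t * E ((t:ℝ) - ((s+1 : ℤ):ℝ) + 1))
      - ∑ t ∈ Finset.Icc s (b-1), f t * E ((t:ℝ) - (s:ℝ) + 1)))
      = (∑ t ∈ Finset.Icc s (b-1), c * (f t * g s * E ((t:ℝ) - (s:ℝ) + 1)))
        - ∑ t ∈ Finset.Icc (s+1) (b-1), c * (f t * g s * E ((t:ℝ) - (s:ℝ))) := by
    intro s
    rw [neg_mul, mul_neg, mul_sub, mul_sub, neg_sub, Finset.mul_sum, Finset.mul_sum,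
      Finset.mul_sum, Finset.mul_sum]
    congr 1
    · exact Finset.sum_congr rfl fun t _ => by ring
    · refine Finset.sum_congr rfl fun t _ => ?_
      push_cast
      ring_nf
  calc ∑ t ∈ Finset.Icc (a+1) (b-1), f t * (c * ((∑ s ∈ Finset.Icc (a+1) t,
          g s * E ((t:ℝ) - (s:ℝ) + 1))
        - ∑ s ∈ Finset.Icc (a+1) (t-1), g s * E (((t-1 : ℤ):ℝ) - (s:ℝ) + 1)))
      = ∑ t ∈ Finset.Icc (a+1) (b-1), ((∑ s ∈ Finset.Icc (a+1) t,
          c * (f t * g s * E ((t:ℝ) - (s:ℝ) + 1)))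
        - ∑ s ∈ Finset.Icc (a+1) (t-1), c * (f t * g s * E ((t:ℝ) - (s:ℝ)))) :=
        Finset.sum_congr rfl fun t _ => L t
    _ = ∑ s ∈ Finset.Icc (a+1) (b-1), ((∑ t ∈ Finset.Icc s (b-1),
          c * (f t * g s * E ((t:ℝ) - (s:ℝ) + 1)))
        - ∑ t ∈ Finset.Icc (s+1) (b-1), c * (f t * g s * E ((t:ℝ) - (s:ℝ)))) := by
        rw [Finset.sum_sub_distrib, Finset.sum_sub_distrib, key1, key2]
    _ = ∑ s ∈ Finset.Icc (a+1) (b-1), g s * (-c * ((∑ t ∈ Finset.Icc (s+1) (b-1),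
          f t * E ((t:ℝ) - ((s+1 : ℤ):ℝ) + 1))
        - ∑ t ∈ Finset.Icc s (b-1), f t * E ((t:ℝ) - (s:ℝ) + 1))) :=
        (Finset.sum_congr rfl fun s _ => (R s).symm)
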